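/- Largest eigenvalue of a symmetric interval matrix with essentially nonnegative midpoint: Let A_c, Δ ∈ ℝ^{n×n} be symmetric with Δ ≥ 0 entrywise, and suppose A_c is essentially nonnegative, i.e., (A_c)_{ij} ≥ 0 for all i ≠ j. Then the maximum, over all symmetric real matrices A with |A − A_c| ≤ Δ entrywise, of the largest eigenvalue λ_max(A), equals λ_max(A_c + Δ), the largest eigenvalue of the upper bound matrix A_c + Δ. -/

import Mathlib

open Matrix

lemma eigvec_unit {n : ℕ} {A : Matrix (Fin n) (Fin n) ℝ} (hA : A.IsHermitian) (k : Fin n) :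
    ⇑(hA.eigenvectorBasis k) ⬝ᵥ ⇑(hA.eigenvectorBasis k) = 1 := by
  have h := hA.eigenvectorBasis.orthonormal.1 k
  have h2 : (inner ℝ (hA.eigenvectorBasis k) (hA.eigenvectorBasis k) : ℝ) = 1 := by
    rw [real_inner_self_eq_norm_sq, h]; norm_num
  rw [PiLp.inner_apply] at h2
  simpa [dotProduct, sq] using h2

lemma rayleigh_le' {n : ℕ} [NeZero n] {B : Matrix (Fin n) (Fin n) ℝ} (hB : B.IsHermitian)
    (x : Fin n → ℝ) (hx : x ⬝ᵥ x = 1) :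
    x ⬝ᵥ B *ᵥ x ≤ ⨆ k, hB.eigenvalues k := by
  set U : Matrix (Fin n) (Fin n) ℝ := (hB.eigenvectorUnitary : Matrix (Fin n) (Fin n) ℝ) with hUdef
  have hsU : star U = Uᵀ := by
    rw [Matrix.star_eq_conjTranspose, Matrix.conjTranspose]
    ext i j; simp
  have hU2 : U * Uᵀ = 1 := by
    rw [← hsU]; exact (Matrix.mem_unitaryGroup_iff).mp hB.eigenvectorUnitary.2
  set y : Fin n → ℝ := x ᵥ* U with hy
  have hyy : y ⬝ᵥ y = 1 := by
    rw [hy, ← Matrix.mulVec_transpose U x, Matrix.dotProduct_mulVec, ← Matrix.mulVec_transpose,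
      Matrix.mulVec_mulVec, Matrix.transpose_transpose, hU2, Matrix.one_mulVec, hx]
  have hkey : x ⬝ᵥ B *ᵥ x = ∑ k, hB.eigenvalues k * (y k)^2 := by
    conv_lhs => rw [hB.spectral_theorem, Unitary.conjStarAlgAut_apply]
    rw [hsU, Matrix.mul_assoc, ← Matrix.mulVec_mulVec, Matrix.dotProduct_mulVec,
      ← Matrix.mulVec_mulVec, Matrix.mulVec_transpose]
    simp [dotProduct, Matrix.mulVec_diagonal, mul_comm, sq, mul_assoc, mul_left_comm]
    rfl
  rw [hkey]
  have hbdd : BddAbove (Set.range hB.eigenvalues) := Set.Finite.bddAbove (Set.finite_range _)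
  calc ∑ k, hB.eigenvalues k * (y k)^2
      ≤ ∑ k, (⨆ j, hB.eigenvalues j) * (y k)^2 := by
        apply Finset.sum_le_sum
        intro k _
        exact mul_le_mul_of_nonneg_right (le_ciSup hbdd k) (sq_nonneg _)
    _ = (⨆ j, hB.eigenvalues j) * ∑ k, (y k)^2 := by rw [Finset.mul_sum]
    _ = ⨆ j, hB.eigenvalues j := by
        have : ∑ k, (y k)^2 = 1 := by simpa [dotProduct, sq] using hyy
        rw [this, mul_one]

lemma lmax_le {n : ℕ} (Ac Δ : Matrix (Fin n) (Fin n) ℝ)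
    (hAc : Ac.IsHermitian) (hΔsym : Δ.IsHermitian) (hΔ : ∀ i j, 0 ≤ Δ i j)
    (hEss : ∀ i j, i ≠ j → 0 ≤ Ac i j)
    (A : Matrix (Fin n) (Fin n) ℝ) (hA : A.IsHermitian)
    (hb : ∀ i j, |A i j - Ac i j| ≤ Δ i j) :
    (⨆ k, hA.eigenvalues k) ≤ ⨆ k, (hAc.add hΔsym).eigenvalues k := by
  rcases Nat.eq_zero_or_pos n with h0 | hn
  · subst h0
    rw [Real.iSup_of_isEmpty, Real.iSup_of_isEmpty]
  · haveI : NeZero n := ⟨hn.ne'⟩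
    apply ciSup_le
    intro k
    set u := ⇑(hA.eigenvectorBasis k) with hu
    have hunit : u ⬝ᵥ u = 1 := eigvec_unit hA k
    have heig : hA.eigenvalues k = u ⬝ᵥ A *ᵥ u := by simpa using hA.eigenvalues_eq k
    set w : Fin n → ℝ := fun i => |u i| with hw
    have hwunit : w ⬝ᵥ w = 1 := by
      simpa [hw, dotProduct, abs_mul_abs_self] using hunit
    have step1 : u ⬝ᵥ A *ᵥ u ≤ w ⬝ᵥ (Ac + Δ) *ᵥ w := by
      simp only [dotProduct, Matrix.mulVec, Finset.mul_sum]
      apply Finset.sum_le_sum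
      intro i _
      apply Finset.sum_le_sum
      intro j _
      rcases eq_or_ne i j with rfl | hij
      · have hdiag : A i i ≤ (Ac + Δ) i i := by
          have := hb i i
          have := abs_le.mp this
          simp [Matrix.add_apply]; linarith [this.2]
        have : u i * (A i i * u i) = A i i * (u i * u i) := by ring
        rw [this]
        have : w i * ((Ac + Δ) i i * w i) = (Ac + Δ) i i * (u i * u i) := by
          simp [hw]; rw [mul_comm, mul_assoc, abs_mul_abs_self]
        rw [this]
        exact mul_le_mul_of_nonneg_right hdiag (mul_self_nonneg _)
      · have habs : |A i j| ≤ (Ac + Δ) i j := by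
          have h1 := abs_le.mp (hb i j)
          have h2 := hEss i j hij
          rw [abs_le]
          constructor <;> simp [Matrix.add_apply] <;> linarith [h1.1, h1.2]
        calc u i * (A i j * u j) ≤ |u i * (A i j * u j)| := le_abs_self _
          _ = w i * (|A i j| * w j) := by simp [hw, abs_mul]
          _ ≤ w i * ((Ac + Δ) i j * w j) := by
              apply mul_le_mul_of_nonneg_left _ (abs_nonneg _)
              exact mul_le_mul_of_nonneg_right habs (abs_nonneg _)
    calc hA.eigenvalues k = u ⬝ᵥ A *ᵥ u := heig
      _ ≤ w ⬝ᵥ (Ac + Δ) *ᵥ w := step1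
      _ ≤ ⨆ k, (hAc.add hΔsym).eigenvalues k := rayleigh_le' (hAc.add hΔsym) w hwunit

/-- Largest eigenvalue of a symmetric interval matrix with essentially
nonnegative midpoint: if `(A_c)_{ij} ≥ 0` for all `i ≠ j`, then the maximum of
`λ_max(A)` over all symmetric `A` with `|A - A_c| ≤ Δ` entrywise equals
`λ_max(A_c + Δ)`. -/
theorem lambdaMax_essentially_nonneg {n : ℕ} (Ac Δ : Matrix (Fin n) (Fin n) ℝ)
    (hAc : Ac.IsHermitian) (hΔsym : Δ.IsHermitian) (hΔ : ∀ i j, 0 ≤ Δ i j)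
    (hEss : ∀ i j, i ≠ j → 0 ≤ Ac i j) :
    sSup {v : ℝ | ∃ (A : Matrix (Fin n) (Fin n) ℝ) (hA : A.IsHermitian),
        (∀ i j, |A i j - Ac i j| ≤ Δ i j) ∧ v = ⨆ k, hA.eigenvalues k} =
      ⨆ k, (hAc.add hΔsym).eigenvalues k := by
  have hmem : (⨆ k, (hAc.add hΔsym).eigenvalues k) ∈
      {v : ℝ | ∃ (A : Matrix (Fin n) (Fin n) ℝ) (hA : A.IsHermitian),
        (∀ i j, |A i j - Ac i j| ≤ Δ i j) ∧ v = ⨆ k, hA.eigenvalues k} := by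
    refine ⟨Ac + Δ, hAc.add hΔsym, fun i j => ?_, rfl⟩
    simp [Matrix.add_apply, abs_of_nonneg (hΔ i j)]
  have hub : ∀ v ∈ {v : ℝ | ∃ (A : Matrix (Fin n) (Fin n) ℝ) (hA : A.IsHermitian),
        (∀ i j, |A i j - Ac i j| ≤ Δ i j) ∧ v = ⨆ k, hA.eigenvalues k},
      v ≤ ⨆ k, (hAc.add hΔsym).eigenvalues k := by
    rintro v ⟨A, hA, hb, rfl⟩
    exact lmax_le Ac Δ hAc hΔsym hΔ hEss A hA hb
  exact le_antisymm (csSup_le ⟨_, hmem⟩ hub) (le_csSup ⟨_, hub⟩ hmem)
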